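/- For p = q = 2, the sequence a(n) = Sr(n,2,2) (the number of nonempty F ⊆ {1,...,n} with 2·min F ≥ |F| that are singletons or arithmetic progressions of difference 2) satisfies a(n+1) - a(n) = ⌊2(n+3)/5⌋ for all n ≥ 1, and its first values are 1, 2, 4, 6, 8, 11, 14, 18, 22, 26. -/
import Mathlib

/-- F is a singleton or an arithmetic progression with common difference q. -/
def IsAP (q : ℕ) (F : Finset ℕ) : Prop :=
  F.card = 1 ∨ ∃ a m : ℕ, 2 ≤ m ∧ F = (Finset.range m).image (fun i => a + q * i)

/-- Number of nonempty F ⊆ {1,...,n} with p·min F ≥ |F| that are singletons or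
arithmetic progressions of common difference q. -/
noncomputable def Sr (n p q : ℕ) : ℕ :=
  Nat.card {F : Finset ℕ //
    F.Nonempty ∧ F ⊆ Finset.Icc 1 n ∧
    p * sInf (F : Set ℕ) ≥ F.card ∧ IsAP q F}

def Pn (n : ℕ) : Finset (ℕ × ℕ) :=
  (Finset.Icc 1 n ×ˢ Finset.Icc 1 n).filter (fun p => p.2 ≤ 2 * p.1 ∧ p.1 + 2 * p.2 ≤ n + 2)

lemma mem_Pn {n : ℕ} {p : ℕ × ℕ} :
    p ∈ Pn n ↔ 1 ≤ p.1 ∧ p.1 ≤ n ∧ 1 ≤ p.2 ∧ p.2 ≤ n ∧ p.2 ≤ 2 * p.1 ∧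
      p.1 + 2 * p.2 ≤ n + 2 := by
  simp [Pn, Finset.mem_filter, Finset.mem_product]
  tauto

def ap (a m : ℕ) : Finset ℕ := (Finset.range m).image (fun i => a + 2 * i)

lemma mem_ap {a m x : ℕ} : x ∈ ap a m ↔ ∃ i < m, x = a + 2 * i := by
  simp [ap, eq_comm]

lemma ap_card (a m : ℕ) : (ap a m).card = m := by
  rw [ap, Finset.card_image_of_injective _ (fun i j h => by omega), Finset.card_range]

lemma ap_sInf (a : ℕ) {m : ℕ} (hm : 1 ≤ m) : sInf ((ap a m : Finset ℕ) : Set ℕ) = a := by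
  have ha : a ∈ ((ap a m : Finset ℕ) : Set ℕ) := by
    simp only [Finset.mem_coe, mem_ap]; exact ⟨0, by omega, by omega⟩
  have h1 := Nat.sInf_le ha
  have h2 : sInf ((ap a m : Finset ℕ) : Set ℕ) ∈ ((ap a m : Finset ℕ) : Set ℕ) :=
    Nat.sInf_mem ⟨a, ha⟩
  simp only [Finset.mem_coe, mem_ap] at h2
  obtain ⟨i, _, h2⟩ := h2
  omega

lemma prop_iff {n : ℕ} (hn : 1 ≤ n) (F : Finset ℕ) :
    (F.Nonempty ∧ F ⊆ Finset.Icc 1 n ∧ 2 * sInf (F : Set ℕ) ≥ F.card ∧ IsAP 2 F) ↔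
    ∃ p ∈ Pn n, ap p.1 p.2 = F := by
  constructor
  · rintro ⟨hne, hsub, hmin, hap | ⟨a, m, hm2, hF⟩⟩
    · obtain ⟨a, rfl⟩ := Finset.card_eq_one.mp hap
      have ha : a ∈ Finset.Icc 1 n := hsub (Finset.mem_singleton_self a)
      rw [Finset.mem_Icc] at ha
      refine ⟨(a, 1), mem_Pn.mpr ⟨by omega, by omega, by omega, by omega, by omega, by omega⟩, ?_⟩
      ext x; simp [mem_ap]
    · have hF' : F = ap a m := hF
      subst hF'
      have hFa : a ∈ ap a m := mem_ap.mpr ⟨0, by omega, by omega⟩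
      have hFb : a + 2 * (m - 1) ∈ ap a m := mem_ap.mpr ⟨m - 1, by omega, rfl⟩
      have ha := Finset.mem_Icc.mp (hsub hFa)
      have hb := Finset.mem_Icc.mp (hsub hFb)
      rw [ap_sInf a (by omega), ap_card] at hmin
      exact ⟨(a, m), mem_Pn.mpr ⟨by omega, by omega, by omega, by omega, by omega, by omega⟩, rfl⟩
  · rintro ⟨⟨a, m⟩, hp, rfl⟩
    obtain ⟨ha1, han, hm1, hmn, hm2a, hsum⟩ := mem_Pn.mp hp
    refine ⟨⟨a, mem_ap.mpr ⟨0, by omega, by omega⟩⟩, ?_, ?_, ?_⟩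
    · intro x hx
      obtain ⟨i, hi, rfl⟩ := mem_ap.mp hx
      rw [Finset.mem_Icc]; omega
    · rw [ap_sInf a (by omega), ap_card]; omega
    · rcases eq_or_lt_of_le hm1 with h | h
      · left; rw [ap_card]; omega
      · right; exact ⟨a, m, by omega, rfl⟩

lemma ap_injOn {n : ℕ} : Set.InjOn (fun p : ℕ × ℕ => ap p.1 p.2) (Pn n : Set (ℕ × ℕ)) := by
  rintro ⟨a, m⟩ ha ⟨b, k⟩ hb h
  simp only at h
  have hm1 : 1 ≤ m := (mem_Pn.mp ha).2.2.1
  have hk1 : 1 ≤ k := (mem_Pn.mp hb).2.2.1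
  have h1 : m = k := by rw [← ap_card a m, h, ap_card]
  have h2 : a = b := by rw [← ap_sInf a hm1, h, ap_sInf b hk1]
  simp [h1, h2]

lemma Sr_eq {n : ℕ} (hn : 1 ≤ n) : Sr n 2 2 = (Pn n).card := by
  have h1 : Sr n 2 2 = Set.ncard {F : Finset ℕ | F.Nonempty ∧ F ⊆ Finset.Icc 1 n ∧
      2 * sInf (F : Set ℕ) ≥ F.card ∧ IsAP 2 F} := Nat.card_coe_set_eq _
  have h2 : {F : Finset ℕ | F.Nonempty ∧ F ⊆ Finset.Icc 1 n ∧
      2 * sInf (F : Set ℕ) ≥ F.card ∧ IsAP 2 F} =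
      ((Pn n).image (fun p => ap p.1 p.2) : Finset (Finset ℕ)) := by
    ext F
    simp only [Set.mem_setOf_eq, Finset.coe_image, Set.mem_image, Finset.mem_coe]
    rw [prop_iff hn F]
  rw [h1, h2, Set.ncard_coe_finset, Finset.card_image_of_injOn ap_injOn]

lemma Pn_succ_card {n : ℕ} (hn : 1 ≤ n) :
    (Pn (n + 1)).card = (Pn n).card + (2 * (n + 3)) / 5 := by
  classical
  have hsplit := Finset.card_filter_add_card_filter_not
    (s := Pn (n + 1)) (p := fun p => p.1 + 2 * p.2 ≤ n + 2)
  have h1 : (Pn (n + 1)).filter (fun p => p.1 + 2 * p.2 ≤ n + 2) = Pn n := by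
    ext ⟨a, m⟩
    simp only [Finset.mem_filter, mem_Pn]
    omega
  have h2 : (Pn (n + 1)).filter (fun p => ¬ p.1 + 2 * p.2 ≤ n + 2) =
      (Finset.Icc 1 ((2 * (n + 3)) / 5)).image (fun m => (n + 3 - 2 * m, m)) := by
    ext ⟨a, m⟩
    simp only [Finset.mem_filter, mem_Pn, Finset.mem_image, Finset.mem_Icc, Prod.mk.injEq]
    constructor
    · rintro ⟨⟨ha1, han, hm1, hmn, hm2a, hsum⟩, hgt⟩
      exact ⟨m, by omega, by omega, rfl⟩
    · rintro ⟨k, ⟨hk1, hk2⟩, h1, rfl⟩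
      omega
  have h3 : ((Finset.Icc 1 ((2 * (n + 3)) / 5)).image (fun m => (n + 3 - 2 * m, m))).card =
      (2 * (n + 3)) / 5 := by
    rw [Finset.card_image_of_injective _ (fun i j h => by
      simpa using congrArg Prod.snd h), Nat.card_Icc]
    omega
  rw [h1, h2, h3] at hsplit
  omega

theorem stmt_18 :
    (∀ n : ℕ, 1 ≤ n → Sr (n + 1) 2 2 - Sr n 2 2 = 2 * (n + 3) / 5) ∧
    Sr 1 2 2 = 1 ∧ Sr 2 2 2 = 2 ∧ Sr 3 2 2 = 4 ∧ Sr 4 2 2 = 6 ∧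
    Sr 5 2 2 = 8 ∧ Sr 6 2 2 = 11 ∧ Sr 7 2 2 = 14 ∧ Sr 8 2 2 = 18 ∧
    Sr 9 2 2 = 22 ∧ Sr 10 2 2 = 26 := by
  refine ⟨fun n hn => ?_, ?_, ?_, ?_, ?_, ?_, ?_, ?_, ?_, ?_, ?_⟩
  · rw [Sr_eq (by omega), Sr_eq hn, Pn_succ_card hn]; omega
  all_goals rw [Sr_eq (by omega)]; decide
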